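/- Let n ≥ 1 and m ≥ 1. The real vector space of harmonic polynomials in n+1 real variables that are homogeneous of degree m (i.e. p ∈ MvPolynomial (Fin (n+1)) ℝ with p homogeneous of degree m and ∑_i ∂_i² p = 0) has dimension (2m + n − 1) · (m + n − 2)! / ((n − 1)! · m!), equivalently Nat.choose (m+n) n − Nat.choose (m+n−2) n. -/

import Mathlib

open scoped BigOperators

/-- The polynomial Laplacian `Δ p = ∑ i, ∂ᵢ (∂ᵢ p)` as a linear map. -/
noncomputable def polyLaplacian (n : ℕ) :
    MvPolynomial (Fin (n + 1)) ℝ →ₗ[ℝ] MvPolynomial (Fin (n + 1)) ℝ :=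
  ∑ i : Fin (n + 1),
    ((MvPolynomial.pderiv i).toLinearMap ∘ₗ (MvPolynomial.pderiv i).toLinearMap)

namespace HarmonicAux

open MvPolynomial

/-! ### Degree counting -/

lemma deg_add {σ : Type*} (a b : σ →₀ ℕ) : (a + b).degree = a.degree + b.degree := by
  simp [Finsupp.degree_eq_weight_one, map_add]

lemma deg_single {σ : Type*} (i : σ) (k : ℕ) : (Finsupp.single i k).degree = k := by
  classical
  simp [Finsupp.degree_eq_weight_one, Finsupp.weight_apply, Finsupp.sum_single_index]

lemma deg_eq_card {σ : Type*} (f : σ →₀ ℕ) :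
    f.degree = Multiset.card (Finsupp.toMultiset f) := by
  rw [Finsupp.card_toMultiset]; rfl

noncomputable def degEquiv (N m : ℕ) : {d : Fin N →₀ ℕ // d.degree = m} ≃ Sym (Fin N) m where
  toFun d := ⟨Finsupp.toMultiset d.1, by rw [← deg_eq_card]; exact d.2⟩
  invFun s := ⟨Multiset.toFinsupp s.1, by rw [deg_eq_card]; simp [s.2]⟩
  left_inv d := by simp
  right_inv s := by apply Subtype.ext; simp

noncomputable instance degFintype (N m : ℕ) : Fintype {d : Fin N →₀ ℕ // d.degree = m} :=
  Fintype.ofEquiv _ (degEquiv N m).symm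

lemma card_deg (N m : ℕ) :
    Fintype.card {d : Fin N →₀ ℕ // d.degree = m} = (N + m - 1).choose m := by
  rw [Fintype.card_congr (degEquiv N m), Sym.card_sym_eq_choose, Fintype.card_fin]

lemma finrank_homog (N m : ℕ) :
    Module.finrank ℝ (homogeneousSubmodule (Fin N) ℝ m) = (N + m - 1).choose m := by
  classical
  rw [homogeneousSubmodule_eq_finsupp_supported]
  haveI : Fintype ↑{d : Fin N →₀ ℕ | d.degree = m} := degFintype N m
  have b := MvPolynomial.basisRestrictSupport ℝ {d : Fin N →₀ ℕ | d.degree = m}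
  have h1 : Module.finrank ℝ (restrictSupport ℝ {d : Fin N →₀ ℕ | d.degree = m})
      = Fintype.card ↑{d : Fin N →₀ ℕ | d.degree = m} := Module.finrank_eq_card_basis b
  exact h1.trans (by rw [← card_deg N m]; exact Fintype.card_congr (Equiv.refl _))

instance homogFD (N m : ℕ) : Module.Finite ℝ (homogeneousSubmodule (Fin N) ℝ m) := by
  classical
  haveI : Finite ↑{d : Fin N →₀ ℕ | d.degree = m} := (degFintype N m).finite
  rw [homogeneousSubmodule_eq_finsupp_supported]
  exact Module.Finite.of_basis
    (MvPolynomial.basisRestrictSupport ℝ {d : Fin N →₀ ℕ | d.degree = m})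

/-! ### The Laplacian on homogeneous polynomials -/

lemma pderiv_isHomogeneous {σ : Type*} [DecidableEq σ] {p : MvPolynomial σ ℝ} {k : ℕ} (i : σ)
    (hp : p.IsHomogeneous k) : (pderiv i p).IsHomogeneous (k - 1) := by
  rw [← support_sum_monomial_coeff p, map_sum]
  apply IsHomogeneous.sum
  intro d hd
  rw [pderiv_monomial]
  rcases Nat.eq_zero_or_pos (d i) with h0 | h1
  · rw [h0]; simp only [Nat.cast_zero, mul_zero]
    rw [(monomial _).map_zero]
    exact isHomogeneous_zero _ _ _
  · apply isHomogeneous_monomial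
    have hdeg : d.degree = k := by
      rw [Finsupp.degree_eq_weight_one]; exact hp (mem_support_iff.mp hd)
    have hle : Finsupp.single i 1 ≤ d := by
      intro j
      classical
      rcases eq_or_ne j i with rfl | hne
      · simpa using Nat.one_le_iff_ne_zero.mpr h1.ne'
      · simp [Finsupp.single_apply, hne.symm]
    have h2 := congrArg Finsupp.degree (tsub_add_cancel_of_le hle)
    rw [deg_add, deg_single] at h2
    omega

lemma lap_apply (n : ℕ) (p : MvPolynomial (Fin (n+1)) ℝ) :
    polyLaplacian n p = ∑ i : Fin (n+1), pderiv i (pderiv i p) := by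
  simp [polyLaplacian, LinearMap.sum_apply]

lemma lap_monomial (n : ℕ) (β : Fin (n+1) →₀ ℕ) :
    polyLaplacian n (monomial β (1:ℝ)) =
      ∑ i : Fin (n+1), monomial (β - Finsupp.single i 1 - Finsupp.single i 1)
        (((β i * (β i - 1) : ℕ) : ℝ)) := by
  rw [lap_apply]
  refine Finset.sum_congr rfl fun i _ => ?_
  rw [pderiv_monomial, pderiv_monomial, one_mul]
  congr 1
  have h : (β - Finsupp.single i 1 : Fin (n+1) →₀ ℕ) i = β i - 1 := by
    simp [Finsupp.sub_apply]
  rw [h]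
  push_cast [Nat.cast_mul]
  ring

lemma two_coord {N : ℕ} (α : Fin N →₀ ℕ) {i j : Fin N} (hij : i ≠ j) :
    α i + α j ≤ α.degree := by
  classical
  rcases Nat.eq_zero_or_pos (α i) with h | h
  · rw [h, zero_add]; exact Finsupp.le_degree _ _
  rcases Nat.eq_zero_or_pos (α j) with h' | h'
  · rw [h', add_zero]; exact Finsupp.le_degree _ _
  have hsub : ({i, j} : Finset (Fin N)) ⊆ α.support := by
    intro x hx
    simp only [Finset.mem_insert, Finset.mem_singleton] at hx
    rcases hx with rfl | rfl <;> simp [Finsupp.mem_support_iff] <;> omega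
  calc α i + α j = ∑ x ∈ ({i, j} : Finset (Fin N)), α x := (Finset.sum_pair hij).symm
    _ ≤ ∑ x ∈ α.support, α x := Finset.sum_le_sum_of_subset hsub
    _ = α.degree := rfl

lemma key_surj (n m : ℕ) (α : Fin (n+1) →₀ ℕ) (hdeg : α.degree = m) :
    monomial α (1:ℝ) ∈ Submodule.map (polyLaplacian n)
      (homogeneousSubmodule (Fin (n+1)) ℝ (m+2)) := by
  classical
  suffices H : ∀ k (α : Fin (n+1) →₀ ℕ), α.degree = m → m - α 0 ≤ k →
      monomial α (1:ℝ) ∈ Submodule.map (polyLaplacian n)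
        (homogeneousSubmodule (Fin (n+1)) ℝ (m+2)) from H (m - α 0) α hdeg le_rfl
  intro k
  induction k using Nat.strong_induction_on with
  | _ k IH =>
  intro α hdeg hk
  set S := Submodule.map (polyLaplacian n) (homogeneousSubmodule (Fin (n+1)) ℝ (m+2)) with hS
  set β := α + Finsupp.single (0 : Fin (n+1)) 2 with hβdef
  have hβ0 : β 0 = α 0 + 2 := by simp [hβdef]
  have hβne : ∀ i : Fin (n+1), i ≠ 0 → β i = α i := by
    intro i hi; simp [hβdef, Finsupp.single_apply, hi.symm]
  have hβdeg : β.degree = m + 2 := by rw [deg_add, deg_single, hdeg]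
  have hβmem : monomial β (1:ℝ) ∈ homogeneousSubmodule (Fin (n+1)) ℝ (m+2) :=
    (mem_homogeneousSubmodule _ _).mpr (isHomogeneous_monomial _ hβdeg)
  have hΔ : polyLaplacian n (monomial β (1:ℝ)) ∈ S := ⟨_, hβmem, rfl⟩
  rw [lap_monomial, ← Finset.add_sum_erase _ _ (Finset.mem_univ (0 : Fin (n+1)))] at hΔ
  have h0exp : β - Finsupp.single 0 1 - Finsupp.single 0 1 = α := by
    ext j
    rcases eq_or_ne j 0 with rfl | hj
    · simp [hβdef, Finsupp.sub_apply]
    · simp [hβdef, Finsupp.sub_apply, Finsupp.single_apply, hj.symm]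
  have hrest : ∑ i ∈ Finset.univ.erase (0 : Fin (n+1)),
      monomial (β - Finsupp.single i 1 - Finsupp.single i 1)
        (((β i * (β i - 1) : ℕ) : ℝ)) ∈ S := by
    refine Submodule.sum_mem S fun i hi => ?_
    have hi0 : i ≠ 0 := Finset.ne_of_mem_erase hi
    have hβi : β i = α i := hβne i hi0
    rcases Nat.lt_or_ge (α i) 2 with hlt | hge
    · have h01 : α i = 0 ∨ α i = 1 := by omega
      have hc : (β i * (β i - 1) : ℕ) = 0 := by rcases h01 with h | h <;> rw [hβi, h] <;> simp
      rw [hc, Nat.cast_zero, (monomial _).map_zero]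
      exact Submodule.zero_mem S
    · set γ := β - Finsupp.single i 1 - Finsupp.single i 1 with hγdef
      have hγeq : γ = β - Finsupp.single i 2 := by
        rw [hγdef, tsub_tsub, ← Finsupp.single_add]
      have hle2 : Finsupp.single i 2 ≤ β := by
        intro j
        rcases eq_or_ne j i with rfl | hji
        · simpa [Finsupp.single_apply, hβi] using hge
        · simp [Finsupp.single_apply, hji.symm]
      have hγadd : γ + Finsupp.single i 2 = β := by rw [hγeq]; exact tsub_add_cancel_of_le hle2
      have hγdeg : γ.degree = m := by
        have := congrArg Finsupp.degree hγadd
        rw [deg_add, deg_single, hβdeg] at this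
        omega
      have hγ0 : γ 0 = α 0 + 2 := by
        rw [hγeq]
        have : (β - Finsupp.single i 2 : Fin (n+1) →₀ ℕ) 0 = β 0 - Finsupp.single i 2 0 := rfl
        rw [this, Finsupp.single_apply, if_neg hi0, hβ0]
        omega
      have hbound : α 0 + α i ≤ m := hdeg ▸ two_coord α (Ne.symm hi0)
      have hlt : m - γ 0 < k := by rw [hγ0]; omega
      have hmem := IH (m - γ 0) hlt γ hγdeg le_rfl
      have : monomial γ (((β i * (β i - 1) : ℕ) : ℝ)) =
          (((β i * (β i - 1) : ℕ) : ℝ)) • monomial γ (1:ℝ) := by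
        rw [smul_monomial, smul_eq_mul, mul_one]
      rw [this]
      exact Submodule.smul_mem S _ hmem
  have hterm0 : monomial α ((((α 0 + 2) * (α 0 + 1) : ℕ)) : ℝ) ∈ S := by
    have h0c : (β 0 * (β 0 - 1) : ℕ) = (α 0 + 2) * (α 0 + 1) := by
      rw [hβ0]; rfl
    have := Submodule.sub_mem S hΔ hrest
    rw [add_sub_cancel_right, h0exp, h0c] at this
    exact this
  have hcne : ((((α 0 + 2) * (α 0 + 1) : ℕ)) : ℝ) ≠ 0 := by
    rw [Nat.cast_ne_zero]; positivity
  have := Submodule.smul_mem S (((((α 0 + 2) * (α 0 + 1) : ℕ)) : ℝ))⁻¹ hterm0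
  rwa [smul_monomial, smul_eq_mul, inv_mul_cancel₀ hcne] at this

lemma map_lap_homog (n m : ℕ) :
    Submodule.map (polyLaplacian n) (homogeneousSubmodule (Fin (n+1)) ℝ (m+2)) =
      homogeneousSubmodule (Fin (n+1)) ℝ m := by
  classical
  apply le_antisymm
  · rintro _ ⟨p, hp, rfl⟩
    rw [mem_homogeneousSubmodule]
    rw [lap_apply]
    apply IsHomogeneous.sum
    intro i _
    have h1 := pderiv_isHomogeneous i ((mem_homogeneousSubmodule _ _).mp hp)
    have h2 := pderiv_isHomogeneous i h1
    exact h2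
  · intro p hp
    rw [← support_sum_monomial_coeff p]
    refine Submodule.sum_mem _ fun d hd => ?_
    have hdeg : d.degree = m := by
      rw [Finsupp.degree_eq_weight_one]
      exact ((mem_homogeneousSubmodule _ _).mp hp) (mem_support_iff.mp hd)
    have h : monomial d (coeff d p) = (coeff d p) • monomial d (1:ℝ) := by
      rw [smul_monomial, smul_eq_mul, mul_one]
    rw [h]
    exact Submodule.smul_mem _ _ (key_surj n m d hdeg)

lemma finrank_inf (n m : ℕ) :
    Module.finrank ℝ ↥(homogeneousSubmodule (Fin (n+1)) ℝ (m+2) ⊓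
        LinearMap.ker (polyLaplacian n)) =
      (n + m + 2).choose (m + 2) - (n + m).choose m := by
  classical
  set H2 := homogeneousSubmodule (Fin (n+1)) ℝ (m+2)
  set f := (polyLaplacian n).domRestrict H2
  have hrange : Module.finrank ℝ ↥(LinearMap.range f) = (n + m).choose m := by
    rw [LinearMap.range_domRestrict, map_lap_homog n m]
    have := finrank_homog (n+1) m
    rwa [show n + 1 + m - 1 = n + m by omega] at this
  have hker : Module.finrank ℝ ↥(LinearMap.ker f) =
      Module.finrank ℝ ↥(H2 ⊓ LinearMap.ker (polyLaplacian n)) := by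
    have hk : LinearMap.ker f =
        Submodule.comap H2.subtype (H2 ⊓ LinearMap.ker (polyLaplacian n)) := by
      rw [LinearMap.ker_domRestrict, Submodule.comap_inf, Submodule.comap_subtype_self,
        top_inf_eq]
    rw [hk]
    exact LinearEquiv.finrank_eq (Submodule.comapSubtypeEquivOfLe inf_le_left)
  have htot : Module.finrank ℝ H2 = (n + m + 2).choose (m + 2) := by
    have := finrank_homog (n+1) (m+2)
    rwa [show n + 1 + (m + 2) - 1 = n + m + 2 by omega] at this
  have hsum := LinearMap.finrank_range_add_finrank_ker f
  rw [hrange, hker, htot] at hsum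
  omega

lemma lap_homog_one (n : ℕ) :
    homogeneousSubmodule (Fin (n+1)) ℝ 1 ≤ LinearMap.ker (polyLaplacian n) := by
  classical
  intro p hp
  rw [LinearMap.mem_ker, lap_apply]
  refine Finset.sum_eq_zero fun i _ => ?_
  have h1 := pderiv_isHomogeneous i ((mem_homogeneousSubmodule _ _).mp hp)
  have h0 : (pderiv i p).totalDegree = 0 :=
    (totalDegree_zero_iff_isHomogeneous _).mpr h1
  rw [← support_sum_monomial_coeff (pderiv i p), map_sum]
  refine Finset.sum_eq_zero fun d hd => ?_
  rw [pderiv_monomial]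
  have hdi : d i = 0 := ((totalDegree_eq_zero_iff _ _).mp h0) d hd i
  rw [hdi]
  simp

lemma nat_id (n m : ℕ) (hn : 1 ≤ n) (hm : 1 ≤ m) :
    (m + n).choose n - (m + n - 2).choose n =
      (2 * m + n - 1) * Nat.factorial (m + n - 2) /
        (Nat.factorial (n - 1) * Nat.factorial m) := by
  have hpos : 0 < Nat.factorial (n - 1) * Nat.factorial m :=
    Nat.mul_pos (Nat.factorial_pos _) (Nat.factorial_pos _)
  refine (Nat.div_eq_of_eq_mul_left hpos ?_).symm
  rcases Nat.lt_or_ge m 2 with h2 | h2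
  · have hm1 : m = 1 := by omega
    subst hm1
    have e0 : (1 + n - 2).choose n = 0 := Nat.choose_eq_zero_of_lt (by omega)
    have e1 : (1 + n).choose n = n + 1 := by
      have := Nat.choose_symm (n := 1 + n) (k := n) (by omega)
      have h : 1 + n - n = 1 := by omega
      rw [h] at this
      rw [← this, Nat.choose_one_right]
      omega
    have e2 : 1 + n - 2 = n - 1 := by omega
    have e3 : 2 * 1 + n - 1 = n + 1 := by omega
    rw [e0, e1, e2, e3, Nat.sub_zero, Nat.factorial_one, mul_one]
  · obtain ⟨m', rfl⟩ : ∃ m', m = m' + 2 := ⟨m - 2, by omega⟩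
    have e2 : m' + 2 + n - 2 = m' + n := by omega
    have e3 : 2 * (m' + 2) + n - 1 = 2 * m' + n + 3 := by omega
    rw [e2, e3]
    have hle : (m' + n).choose n ≤ (m' + 2 + n).choose n :=
      Nat.choose_le_choose n (by omega)
    have key : n * ((2 * m' + n + 3) * Nat.factorial (m' + n)) +
        (m' + n).choose n * (Nat.factorial n * Nat.factorial (m' + 2)) =
        (m' + 2 + n).choose n * (Nat.factorial n * Nat.factorial (m' + 2)) := by
      have e1 : (m' + 2 + n).choose n * Nat.factorial n * Nat.factorial (m' + 2) =
          Nat.factorial (m' + 2 + n) := by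
        have := Nat.choose_mul_factorial_mul_factorial (n := m' + 2 + n) (k := n) (by omega)
        have h : m' + 2 + n - n = m' + 2 := by omega
        rwa [h] at this
      have e2' : (m' + n).choose n * Nat.factorial n * Nat.factorial m' =
          Nat.factorial (m' + n) := by
        have := Nat.choose_mul_factorial_mul_factorial (n := m' + n) (k := n) (by omega)
        have h : m' + n - n = m' := by omega
        rwa [h] at this
      have f1 : Nat.factorial (m' + 2 + n) =
          (m' + n + 2) * ((m' + n + 1) * Nat.factorial (m' + n)) := by
        have h : m' + 2 + n = (m' + n + 1) + 1 := by omega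
        rw [h, Nat.factorial_succ, Nat.factorial_succ]
      have f2 : Nat.factorial (m' + 2) =
          (m' + 2) * ((m' + 1) * Nat.factorial m') := by
        rw [Nat.factorial_succ, Nat.factorial_succ]
      have g1 : (m' + 2 + n).choose n * (Nat.factorial n * Nat.factorial (m' + 2)) =
          (m' + n + 2) * ((m' + n + 1) * Nat.factorial (m' + n)) := by
        rw [← f1, ← e1]; ring
      have g2 : (m' + n).choose n * (Nat.factorial n * Nat.factorial (m' + 2)) =
          (m' + 2) * ((m' + 1) * Nat.factorial (m' + n)) := by
        calc (m' + n).choose n * (Nat.factorial n * Nat.factorial (m' + 2))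
            = (m' + 2) * ((m' + 1) *
                ((m' + n).choose n * Nat.factorial n * Nat.factorial m')) := by
              rw [f2]; ring
          _ = (m' + 2) * ((m' + 1) * Nat.factorial (m' + n)) := by rw [e2']
      rw [g1, g2]; ring
    have hn' : 0 < n := hn
    apply Nat.eq_of_mul_eq_mul_left hn'
    have hfac : n * Nat.factorial (n - 1) = Nat.factorial n := by
      have h : n = (n - 1) + 1 := by omega
      rw [h, Nat.factorial_succ]; simp
    have A : n * ((m' + 2 + n).choose n * (Nat.factorial (n - 1) * Nat.factorial (m' + 2))) =
        (m' + 2 + n).choose n * (Nat.factorial n * Nat.factorial (m' + 2)) := by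
      rw [← hfac]; ring
    have B : n * ((m' + n).choose n * (Nat.factorial (n - 1) * Nat.factorial (m' + 2))) =
        (m' + n).choose n * (Nat.factorial n * Nat.factorial (m' + 2)) := by
      rw [← hfac]; ring
    calc n * ((2 * m' + n + 3) * Nat.factorial (m' + n))
        = (m' + 2 + n).choose n * (Nat.factorial n * Nat.factorial (m' + 2)) -
          (m' + n).choose n * (Nat.factorial n * Nat.factorial (m' + 2)) := by omega
      _ = n * ((m' + 2 + n).choose n * (Nat.factorial (n - 1) * Nat.factorial (m' + 2))) -
          n * ((m' + n).choose n * (Nat.factorial (n - 1) * Nat.factorial (m' + 2))) := by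
          rw [A, B]
      _ = n * (((m' + 2 + n).choose n - (m' + n).choose n) *
          (Nat.factorial (n - 1) * Nat.factorial (m' + 2))) := by
          rw [Nat.sub_mul, Nat.mul_sub]

end HarmonicAux

/-- The space of harmonic polynomials in `n+1` real variables that are
homogeneous of degree `m ≥ 1` has dimension
`(2m + n - 1)(m + n - 2)!/((n - 1)! m!) = C(m+n, n) - C(m+n-2, n)`. -/
theorem finrank_harmonic_homogeneous (n m : ℕ) (hn : 1 ≤ n) (hm : 1 ≤ m) :
    Module.finrank ℝ
        ↥(MvPolynomial.homogeneousSubmodule (Fin (n + 1)) ℝ m ⊓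
          LinearMap.ker (polyLaplacian n)) =
      (2 * m + n - 1) * Nat.factorial (m + n - 2) /
        (Nat.factorial (n - 1) * Nat.factorial m) ∧
    Module.finrank ℝ
        ↥(MvPolynomial.homogeneousSubmodule (Fin (n + 1)) ℝ m ⊓
          LinearMap.ker (polyLaplacian n)) =
      Nat.choose (m + n) n - Nat.choose (m + n - 2) n := by
  open HarmonicAux in
  have hdim : Module.finrank ℝ
      ↥(MvPolynomial.homogeneousSubmodule (Fin (n + 1)) ℝ m ⊓
        LinearMap.ker (polyLaplacian n)) =
      Nat.choose (m + n) n - Nat.choose (m + n - 2) n := by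
    rcases Nat.lt_or_ge m 2 with h2 | h2
    · have hm1 : m = 1 := by omega
      subst hm1
      have heq : MvPolynomial.homogeneousSubmodule (Fin (n + 1)) ℝ 1 ⊓
          LinearMap.ker (polyLaplacian n) =
          MvPolynomial.homogeneousSubmodule (Fin (n + 1)) ℝ 1 :=
        inf_eq_left.mpr (lap_homog_one n)
      rw [heq]
      have h1 := finrank_homog (n+1) 1
      rw [show n + 1 + 1 - 1 = n + 1 by omega, Nat.choose_one_right] at h1
      rw [h1]
      have e0 : (1 + n - 2).choose n = 0 := Nat.choose_eq_zero_of_lt (by omega)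
      have e1 : (1 + n).choose n = n + 1 := by
        have := Nat.choose_symm (n := 1 + n) (k := n) (by omega)
        have h : 1 + n - n = 1 := by omega
        rw [h] at this
        rw [← this, Nat.choose_one_right]
        omega
      omega
    · obtain ⟨m', rfl⟩ : ∃ m', m = m' + 2 := ⟨m - 2, by omega⟩
      rw [finrank_inf n m']
      have c1 : (m' + 2 + n).choose n = (n + m' + 2).choose (m' + 2) := by
        have := Nat.choose_symm (n := m' + 2 + n) (k := n) (by omega)
        have h : m' + 2 + n - n = m' + 2 := by omega
        rw [h] at this
        rw [← this]
        congr 1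
        omega
      have c2 : (m' + 2 + n - 2).choose n = (n + m').choose m' := by
        rw [show m' + 2 + n - 2 = m' + n by omega]
        have := Nat.choose_symm (n := m' + n) (k := n) (by omega)
        have h : m' + n - n = m' := by omega
        rw [h] at this
        rw [← this]
        congr 1
        omega
      rw [c1, c2]
  exact ⟨hdim.trans (HarmonicAux.nat_id n m hn hm), hdim⟩
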